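/- Let G be a profinite group and M a discrete G-module satisfying the hypothesis of the previous lemma with n = 1, i.e. Ext^1_G(ℤ[G/H]/I, M) = 0 for all open normal H and all left ideals I ⊆ ℤ[G/H]. Then M is an injective object in the category of discrete G-modules. -/

import Mathlib

/- Here `G` is a profinite group and discrete `G`-modules are abelian groups with a
`G`-action with open stabilizers.  For an open normal subgroup `H ⊆ G`, the group ring
`ℤ[G/H]` is the free abelian group `(G ⧸ H) →₀ ℤ` with `G` permuting the basis, and a
quotient of `ℤ[G/H]` by a left ideal is the same thing as a discrete `G`-module `Q`
equipped with a `G`-equivariant surjection `ℤ[G/H] → Q`.  The hypothesis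
`Ext¹_G(ℤ[G/H]/I, M) = 0` is expressed by the splitting of all short exact sequences of
discrete `G`-modules `0 → M → E → ℤ[G/H]/I → 0`, and injectivity of `M` by the
extension property of `G`-equivariant morphisms into `M`. -/



theorem aux_stab_open {G : Type} [Group G] [TopologicalSpace G] [IsTopologicalGroup G]
    {X : Type} [MulAction G X] (x : X) (U : Subgroup G)
    (hUo : IsOpen (U : Set G)) (hU : ∀ g ∈ U, g • x = x) : IsOpen {g : G | g • x = x} := by
  have h : {g : G | g • x = x} = ((MulAction.stabilizer G x : Subgroup G) : Set G) := rfl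
  rw [h]
  exact Subgroup.isOpen_mono (fun g hg => hU g hg) hUo

def AuxGood (G F M : Type) [Group G] [AddCommGroup F] [AddCommGroup M]
    [DistribMulAction G F] [DistribMulAction G M] (Γ : Set (F × M)) : Prop :=
  (0 : F × M) ∈ Γ ∧ (∀ a ∈ Γ, ∀ b ∈ Γ, a + b ∈ Γ) ∧ (∀ a ∈ Γ, -a ∈ Γ) ∧
  (∀ m : M, ((0 : F), m) ∈ Γ → m = 0) ∧
  (∀ (g : G), ∀ a ∈ Γ, (g • (a : F × M).1, g • a.2) ∈ Γ)

set_option maxHeartbeats 1600000 in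
theorem aux_step
    (G : Type) [Group G] [TopologicalSpace G] [IsTopologicalGroup G] [CompactSpace G]
    (M : Type) [AddCommGroup M] [DistribMulAction G M]
    (hMd : ∀ x : M, IsOpen {g : G | g • x = x})
    (hext : ∀ (H : Subgroup G), H.Normal → IsOpen (H : Set G) →
      ∀ (Q : Type) (_ : AddCommGroup Q) (_ : DistribMulAction G Q),
        (∀ q : Q, IsOpen {g : G | g • q = q}) →
        ∀ π : ((G ⧸ H) →₀ ℤ) →+ Q,
          Function.Surjective π →
          (∀ (g : G) (d : (G ⧸ H) →₀ ℤ),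
            π (Finsupp.mapDomain (fun x => g • x) d) = g • π d) →
          ∀ (E : Type) (_ : AddCommGroup E) (_ : DistribMulAction G E),
            (∀ e : E, IsOpen {g : G | g • e = e}) →
            ∀ (i : M →+ E) (p : E →+ Q),
              (∀ (g : G) (x : M), i (g • x) = g • i x) →
              (∀ (g : G) (e : E), p (g • e) = g • p e) →
              Function.Injective i → Function.Surjective p →
              (∀ e : E, p e = 0 ↔ e ∈ Set.range i) →
              ∃ r : E →+ M, (∀ (g : G) (e : E), r (g • e) = g • r e) ∧
                ∀ x : M, r (i x) = x)
    (F : Type) [AddCommGroup F] [DistribMulAction G F]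
    (hFd : ∀ x : F, IsOpen {g : G | g • x = x})
    (Γ : Set (F × M)) (hΓ : AuxGood G F M Γ) (x : F) :
    ∃ Γ' : Set (F × M), Γ ⊆ Γ' ∧ AuxGood G F M Γ' ∧ ∃ m, (x, m) ∈ Γ' := by
  obtain ⟨h0, hadd, hneg, hfun, hstab⟩ := hΓ
  -- choose an open normal subgroup fixing `x`
  have hUo : IsOpen ((MulAction.stabilizer G x : Subgroup G) : Set G) := hFd x
  obtain ⟨H, hH⟩ := IsTopologicalGroup.exist_openNormalSubgroup_sub_clopen_nhds_of_one
    ⟨Subgroup.isClosed_of_isOpen _ hUo, hUo⟩ (one_mem _)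
  set K : Subgroup G := H.toSubgroup with hKdef
  haveI hKn : K.Normal := H.isNormal'
  have hKo : IsOpen (K : Set G) := H.isOpen'
  have hKx : ∀ g ∈ K, g • x = x := fun g hg => hH hg
  -- K acts trivially on G ⧸ K
  have hKfix : ∀ g ∈ K, ∀ c : G ⧸ K, g • c = c := by
    intro g hg c
    refine QuotientGroup.induction_on c fun a => ?_
    rw [MulAction.Quotient.smul_mk]
    rw [QuotientGroup.eq]
    have h2 := hKn.conj_mem g hg a⁻¹
    simp only [inv_inv] at h2
    have := K.inv_mem h2
    simpa [mul_assoc, mul_inv_rev] using this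
  -- the group ring `ℤ[G/K]` and the action maps
  set mapd : G → (((G ⧸ K) →₀ ℤ) →+ ((G ⧸ K) →₀ ℤ)) :=
    fun g => Finsupp.mapDomain.addMonoidHom (fun y : G ⧸ K => g • y) with hmapddef
  have hmapd_apply : ∀ g d, mapd g d = Finsupp.mapDomain (fun y : G ⧸ K => g • y) d :=
    fun _ _ => rfl
  have hmapd_one : ∀ d, mapd (1 : G) d = d := by
    intro d
    rw [hmapd_apply, show (fun y : G ⧸ K => (1 : G) • y) = id from funext fun y => one_smul G y]
    exact Finsupp.mapDomain_id
  have hmapd_mul : ∀ g h d, mapd (g * h) d = mapd g (mapd h d) := by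
    intro g h d
    rw [hmapd_apply, hmapd_apply, hmapd_apply,
      show (fun y : G ⧸ K => (g * h) • y) =
        (fun y : G ⧸ K => g • y) ∘ (fun y : G ⧸ K => h • y) from funext fun y => mul_smul g h y]
    exact Finsupp.mapDomain_comp
  have hmapd_K : ∀ g ∈ K, ∀ d, mapd g d = d := by
    intro g hg d
    rw [hmapd_apply, show (fun y : G ⧸ K => g • y) = id from funext fun y => hKfix g hg y]
    exact Finsupp.mapDomain_id
  -- the evaluation map ψ : ℤ[G/K] → F, basis element gK ↦ g • x
  set u : G ⧸ K → F := fun c =>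
    Quotient.liftOn' c (fun g => g • x) (by
      intro a b hab
      have h : a⁻¹ * b ∈ K := QuotientGroup.leftRel_apply.mp hab
      show a • x = b • x
      have hb : b = a * (a⁻¹ * b) := by group
      rw [hb, mul_smul, hKx _ h]) with hudef
  have hu_mk : ∀ a : G, u (QuotientGroup.mk a) = a • x := fun a => rfl
  have hu_smul : ∀ (g : G) (c : G ⧸ K), u (g • c) = g • u c := by
    intro g c
    refine QuotientGroup.induction_on c fun a => ?_
    rw [MulAction.Quotient.smul_mk, hu_mk, hu_mk, smul_eq_mul, mul_smul]
  set ψ : ((G ⧸ K) →₀ ℤ) →+ F := Finsupp.liftAddHom (fun c => zmultiplesHom F (u c)) with hψdef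
  have hψ_single : ∀ (c : G ⧸ K) (n : ℤ), ψ (Finsupp.single c n) = n • u c := by
    intro c n; simp [hψdef]
  have hψ_equiv : ∀ g d, ψ (mapd g d) = g • ψ d := by
    intro g d
    have hcomp : ψ.comp (mapd g) = (DistribMulAction.toAddMonoidHom F g).comp ψ := by
      apply Finsupp.addHom_ext
      intro c n
      simp only [AddMonoidHom.comp_apply]
      rw [hmapd_apply, Finsupp.mapDomain_single, hψ_single, hψ_single, hu_smul]
      rw [AddMonoidHom.map_zsmul]
      rfl
    exact DFunLike.congr_fun hcomp d
  -- the ideal I and quotient Q = ℤ[G/K]/I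
  set I : AddSubgroup ((G ⧸ K) →₀ ℤ) :=
    { carrier := {d | ∃ m, (ψ d, m) ∈ Γ}
      zero_mem' := ⟨0, by rw [map_zero]; exact h0⟩
      add_mem' := by
        rintro a b ⟨ma, ha⟩ ⟨mb, hb⟩
        exact ⟨ma + mb, by rw [map_add]; exact hadd _ ha _ hb⟩
      neg_mem' := by
        rintro a ⟨m, hm⟩
        exact ⟨-m, by rw [map_neg]; exact hneg _ hm⟩ } with hIdef
  have hImem : ∀ d, d ∈ I ↔ ∃ m, (ψ d, m) ∈ Γ := fun d => Iff.rfl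
  set Q := ((G ⧸ K) →₀ ℤ) ⧸ I with hQdef
  have hIg : ∀ g : G, I ≤ I.comap (mapd g) := by
    intro g d hd
    obtain ⟨m, hm⟩ := hd
    exact ⟨g • m, by rw [hψ_equiv]; exact hstab g _ hm⟩
  letI instQ : DistribMulAction G Q :=
    { smul := fun g => QuotientAddGroup.map I I (mapd g) (hIg g)
      one_smul := fun q => QuotientAddGroup.induction_on q fun d => by
        show QuotientAddGroup.map I I (mapd 1) (hIg 1) (QuotientAddGroup.mk d) = _
        rw [QuotientAddGroup.map_mk, hmapd_one]
      mul_smul := fun g h q => QuotientAddGroup.induction_on q fun d => by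
        show QuotientAddGroup.map I I (mapd (g * h)) _ (QuotientAddGroup.mk d) =
          QuotientAddGroup.map I I (mapd g) _
            (QuotientAddGroup.map I I (mapd h) _ (QuotientAddGroup.mk d))
        rw [QuotientAddGroup.map_mk, QuotientAddGroup.map_mk, QuotientAddGroup.map_mk, hmapd_mul]
      smul_zero := fun g => map_zero (QuotientAddGroup.map I I (mapd g) (hIg g))
      smul_add := fun g a b => map_add (QuotientAddGroup.map I I (mapd g) (hIg g)) a b }
  have hQsmul_mk : ∀ (g : G) (d : (G ⧸ K) →₀ ℤ),
      g • (QuotientAddGroup.mk d : Q) = QuotientAddGroup.mk (mapd g d) :=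
    fun g d => QuotientAddGroup.map_mk I I (mapd g) (hIg g) d
  have hQd : ∀ q : Q, IsOpen {g : G | g • q = q} := by
    intro q
    refine QuotientAddGroup.induction_on q fun d => ?_
    refine aux_stab_open _ K hKo ?_
    intro g hg
    rw [hQsmul_mk, hmapd_K g hg]
  set π : ((G ⧸ K) →₀ ℤ) →+ Q := QuotientAddGroup.mk' I with hπdef
  have hπsurj : Function.Surjective π := QuotientAddGroup.mk'_surjective I
  have hπequiv : ∀ (g : G) (d : (G ⧸ K) →₀ ℤ),
      π (Finsupp.mapDomain (fun y => g • y) d) = g • π d := by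
    intro g d
    show QuotientAddGroup.mk (Finsupp.mapDomain (fun y => g • y) d) =
      g • (QuotientAddGroup.mk d : Q)
    rw [hQsmul_mk]
    rfl
  -- the extension E = (M × ℤ[G/K]) ⧸ N
  set P := M × ((G ⧸ K) →₀ ℤ) with hPdef
  set N : AddSubgroup P :=
    { carrier := {pr | (ψ pr.2, -pr.1) ∈ Γ}
      zero_mem' := by
        show (ψ (0 : (G ⧸ K) →₀ ℤ), -(0 : M)) ∈ Γ
        rw [map_zero, neg_zero, Prod.mk_zero_zero]; exact h0
      add_mem' := by
        intro a b ha hb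
        show (ψ (a.2 + b.2), -(a.1 + b.1)) ∈ Γ
        have := hadd _ ha _ hb
        rw [Prod.mk_add_mk] at this
        rw [map_add, neg_add]
        exact this
      neg_mem' := by
        intro a ha
        show (ψ (-a.2), - -a.1) ∈ Γ
        have := hneg _ ha
        rw [Prod.neg_mk] at this
        rw [map_neg, neg_neg]
        rw [show (-ψ a.2, a.1) = -(ψ a.2, -a.1) by rw [Prod.neg_mk, neg_neg]]
        exact hneg _ ha } with hNdef
  have hNmem : ∀ pr : P, pr ∈ N ↔ (ψ pr.2, -pr.1) ∈ Γ := fun pr => Iff.rfl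
  set E := P ⧸ N with hEdef
  set pmapd : G → (P →+ P) :=
    fun g => (DistribMulAction.toAddMonoidHom M g).prodMap (mapd g) with hpmapddef
  have hpmapd_apply : ∀ (g : G) (pr : P), pmapd g pr = (g • pr.1, mapd g pr.2) := fun _ _ => rfl
  have hNg : ∀ g : G, N ≤ N.comap (pmapd g) := by
    intro g pr hpr
    show (ψ ((pmapd g pr).2), -(pmapd g pr).1) ∈ Γ
    rw [hpmapd_apply]
    have := hstab g _ hpr
    simp only at this
    rw [hψ_equiv, show -(g • pr.1) = g • (-pr.1) from (smul_neg g pr.1).symm]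
    exact this
  have hpmapd_one : ∀ pr : P, pmapd 1 pr = pr := by
    intro pr
    rw [hpmapd_apply, hmapd_one, one_smul]
  have hpmapd_mul : ∀ (g h : G) (pr : P), pmapd (g * h) pr = pmapd g (pmapd h pr) := by
    intro g h pr
    rw [hpmapd_apply, hpmapd_apply, hpmapd_apply, hmapd_mul, mul_smul]
  letI instE : DistribMulAction G E :=
    { smul := fun g => QuotientAddGroup.map N N (pmapd g) (hNg g)
      one_smul := fun e => QuotientAddGroup.induction_on e fun pr => by
        show QuotientAddGroup.map N N (pmapd 1) (hNg 1) (QuotientAddGroup.mk pr) = _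
        rw [QuotientAddGroup.map_mk, hpmapd_one]
      mul_smul := fun g h e => QuotientAddGroup.induction_on e fun pr => by
        show QuotientAddGroup.map N N (pmapd (g * h)) _ (QuotientAddGroup.mk pr) =
          QuotientAddGroup.map N N (pmapd g) _
            (QuotientAddGroup.map N N (pmapd h) _ (QuotientAddGroup.mk pr))
        rw [QuotientAddGroup.map_mk, QuotientAddGroup.map_mk, QuotientAddGroup.map_mk, hpmapd_mul]
      smul_zero := fun g => map_zero (QuotientAddGroup.map N N (pmapd g) (hNg g))
      smul_add := fun g a b => map_add (QuotientAddGroup.map N N (pmapd g) (hNg g)) a b }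
  have hEsmul_mk : ∀ (g : G) (pr : P),
      g • (QuotientAddGroup.mk pr : E) = QuotientAddGroup.mk (pmapd g pr) :=
    fun g pr => QuotientAddGroup.map_mk N N (pmapd g) (hNg g) pr
  have hEd : ∀ e : E, IsOpen {g : G | g • e = e} := by
    intro e
    refine QuotientAddGroup.induction_on e fun pr => ?_
    refine aux_stab_open _ ((MulAction.stabilizer G pr.1) ⊓ K) ?_ ?_
    · rw [Subgroup.coe_inf]
      exact (hMd pr.1).inter hKo
    · intro g hg
      obtain ⟨hg1, hg2⟩ := Subgroup.mem_inf.mp hg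
      rw [hEsmul_mk, hpmapd_apply, hmapd_K g hg2]
      have : g • pr.1 = pr.1 := hg1
      rw [this]
  set i : M →+ E := (QuotientAddGroup.mk' N).comp (AddMonoidHom.inl M ((G ⧸ K) →₀ ℤ)) with hidef
  have hi_apply : ∀ m : M, i m = QuotientAddGroup.mk ((m, 0) : P) := fun m => rfl
  set p : E →+ Q := QuotientAddGroup.lift N
      ((QuotientAddGroup.mk' I).comp (AddMonoidHom.snd M ((G ⧸ K) →₀ ℤ)))
      (fun pr hpr => (QuotientAddGroup.eq_zero_iff pr.2).mpr ⟨-pr.1, hpr⟩) with hpdef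
  have hp_apply : ∀ pr : P, p (QuotientAddGroup.mk pr) = QuotientAddGroup.mk pr.2 :=
    fun pr => rfl
  have hi_equiv : ∀ (g : G) (m : M), i (g • m) = g • i m := by
    intro g m
    rw [hi_apply, hi_apply, hEsmul_mk, hpmapd_apply, map_zero]
  have hp_equiv : ∀ (g : G) (e : E), p (g • e) = g • p e := by
    intro g e
    refine QuotientAddGroup.induction_on e fun pr => ?_
    rw [hEsmul_mk, hp_apply, hp_apply, hQsmul_mk, hpmapd_apply]
  have hi_inj : Function.Injective i := by
    rw [injective_iff_map_eq_zero]
    intro m hm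
    rw [hi_apply] at hm
    have h1 : ((m, 0) : P) ∈ N := (QuotientAddGroup.eq_zero_iff _).mp hm
    rw [hNmem] at h1
    rw [map_zero] at h1
    have := hfun (-m) h1
    exact neg_eq_zero.mp this
  have hp_surj : Function.Surjective p := by
    intro q
    refine QuotientAddGroup.induction_on q fun d => ?_
    exact ⟨QuotientAddGroup.mk ((0, d) : P), hp_apply _⟩
  have hexact : ∀ e : E, p e = 0 ↔ e ∈ Set.range i := by
    intro e
    refine QuotientAddGroup.induction_on e fun pr => ?_
    constructor
    · intro hpe
      rw [hp_apply] at hpe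
      have h2 : pr.2 ∈ I := (QuotientAddGroup.eq_zero_iff _).mp hpe
      obtain ⟨m', hm'⟩ := h2
      refine ⟨pr.1 + m', ?_⟩
      rw [hi_apply]
      rw [QuotientAddGroup.eq_iff_sub_mem]
      rw [hNmem]
      show (ψ ((pr.1 + m', (0 : (G ⧸ K) →₀ ℤ)) - pr).2, -((pr.1 + m', (0:(G ⧸ K) →₀ ℤ)) - pr).1) ∈ Γ
      have h1 : ((pr.1 + m', (0 : (G ⧸ K) →₀ ℤ)) - pr) = (m', -pr.2) := by
        rw [Prod.ext_iff]
        constructor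
        · show pr.1 + m' - pr.1 = m'
          abel
        · show 0 - pr.2 = -pr.2
          abel
      rw [h1]
      show (ψ (-pr.2), -m') ∈ Γ
      rw [map_neg]
      rw [show ((-ψ pr.2, -m') : F × M) = -(ψ pr.2, m') from (Prod.neg_mk (ψ pr.2) m').symm]
      exact hneg _ hm'
    · rintro ⟨m₀, hm₀⟩
      rw [← hm₀, hi_apply, hp_apply]
      exact map_zero (QuotientAddGroup.mk' I)
  -- apply the Ext-vanishing hypothesis
  obtain ⟨r, hreq, hri⟩ := hext K hKn hKo Q inferInstance inferInstance hQd π hπsurj hπequiv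
    E inferInstance inferInstance hEd i p hi_equiv hp_equiv hi_inj hp_surj hexact
  set ρ : ((G ⧸ K) →₀ ℤ) →+ M :=
    r.comp ((QuotientAddGroup.mk' N).comp (AddMonoidHom.inr M ((G ⧸ K) →₀ ℤ))) with hρdef
  have hρ_apply : ∀ d, ρ d = r (QuotientAddGroup.mk ((0, d) : P)) := fun d => rfl
  have hρ_equiv : ∀ g d, ρ (mapd g d) = g • ρ d := by
    intro g d
    rw [hρ_apply, hρ_apply]
    have h1 : (QuotientAddGroup.mk ((0, mapd g d) : P) : E) =
        g • QuotientAddGroup.mk ((0, d) : P) := by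
      rw [hEsmul_mk, hpmapd_apply]
      congr 1
      exact Prod.ext_iff.mpr ⟨(smul_zero g).symm, rfl⟩
    rw [h1, hreq]
  have hρ_key : ∀ d m', (ψ d, m') ∈ Γ → ρ d = m' := by
    intro d m' hm'
    have h1 : (QuotientAddGroup.mk ((0, d) : P) : E) = i m' := by
      rw [hi_apply, QuotientAddGroup.eq_iff_sub_mem, hNmem]
      show (ψ (((0 : M), d) - (m', 0)).2, -(((0 : M), d) - (m', 0)).1) ∈ Γ
      have h2 : (((0 : M), d) - (m', 0)) = (-m', d) := by
        rw [Prod.ext_iff]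
        constructor
        · show (0 : M) - m' = -m'
          abel
        · show d - 0 = d
          abel
      rw [h2]
      show (ψ d, - -m') ∈ Γ
      rw [neg_neg]
      exact hm'
    rw [hρ_apply, h1, hri]
  -- the enlarged graph
  refine ⟨{z : F × M | ∃ a ∈ Γ, ∃ d, z = a + (ψ d, ρ d)}, ?_, ⟨?_, ?_, ?_, ?_, ?_⟩, ?_⟩
  · intro a ha
    exact ⟨a, ha, 0, by rw [map_zero, map_zero, Prod.mk_zero_zero, add_zero]⟩
  · exact ⟨0, h0, 0, by rw [map_zero, map_zero, Prod.mk_zero_zero, add_zero]⟩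
  · rintro z₁ ⟨a₁, ha₁, d₁, rfl⟩ z₂ ⟨a₂, ha₂, d₂, rfl⟩
    refine ⟨a₁ + a₂, hadd _ ha₁ _ ha₂, d₁ + d₂, ?_⟩
    rw [map_add, map_add, ← Prod.mk_add_mk]
    exact add_add_add_comm _ _ _ _
  · rintro z ⟨a, ha, d, rfl⟩
    refine ⟨-a, hneg _ ha, -d, ?_⟩
    rw [map_neg, map_neg, ← Prod.neg_mk, ← neg_add]
  · rintro m ⟨a, ha, d, hz⟩
    have h1 : (0 : F) = a.1 + ψ d := congrArg Prod.fst hz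
    have h2 : m = a.2 + ρ d := congrArg Prod.snd hz
    have hψd : ψ d = -a.1 := eq_neg_of_add_eq_zero_right h1.symm
    have hmem : (ψ d, -a.2) ∈ Γ := by
      rw [hψd, ← Prod.neg_mk]
      exact hneg _ ha
    have h3 := hρ_key d (-a.2) hmem
    rw [h2, h3]
    abel
  · rintro g z ⟨a, ha, d, rfl⟩
    refine ⟨(g • a.1, g • a.2), hstab g a ha, mapd g d, ?_⟩
    rw [hψ_equiv, hρ_equiv, Prod.mk_add_mk]
    refine Prod.ext_iff.mpr ⟨?_, ?_⟩
    · show g • (a.1 + ψ d) = g • a.1 + g • ψ d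
      exact smul_add g _ _
    · show g • (a.2 + ρ d) = g • a.2 + g • ρ d
      exact smul_add g _ _
  · refine ⟨ρ (Finsupp.single (QuotientGroup.mk 1) 1), 0, h0,
      Finsupp.single (QuotientGroup.mk 1) 1, ?_⟩
    rw [zero_add]
    have hx : ψ (Finsupp.single (QuotientGroup.mk (1 : G)) (1 : ℤ)) = x := by
      rw [hψ_single, hu_mk, one_smul, one_smul]
    rw [hx]

/-- **(Matlis-type criterion, `n = 1`: injectivity.)** Let `G` be a profinite group and
`M` a discrete `G`-module such that `Ext¹_G(ℤ[G/H]/I, M) = 0` for every open normal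
subgroup `H ⊆ G` and every left ideal `I ⊆ ℤ[G/H]` (i.e. every extension of such a
quotient module by `M` splits).  Then `M` is an injective object in the category of
discrete `G`-modules: every `G`-equivariant morphism from a submodule `E` of a discrete
`G`-module `F` into `M` extends to `F`. -/
theorem injective_of_ext_vanishing_on_cyclic_quotients
    (G : Type) [Group G] [TopologicalSpace G] [IsTopologicalGroup G]
    [CompactSpace G] [TotallyDisconnectedSpace G] [T2Space G]
    (M : Type) [AddCommGroup M] [DistribMulAction G M]
    (hMd : ∀ x : M, IsOpen {g : G | g • x = x})
    -- `Ext¹_G(ℤ[G/H]/I, M) = 0` for all open normal `H` and all left ideals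
    -- `I ⊆ ℤ[G/H]` (the quotient `ℤ[G/H]/I` being presented by a `G`-equivariant
    -- surjection `π` from `ℤ[G/H] = (G ⧸ H) →₀ ℤ`):
    (hext : ∀ (H : Subgroup G), H.Normal → IsOpen (H : Set G) →
      ∀ (Q : Type) (_ : AddCommGroup Q) (_ : DistribMulAction G Q),
        (∀ q : Q, IsOpen {g : G | g • q = q}) →
        ∀ π : ((G ⧸ H) →₀ ℤ) →+ Q,
          Function.Surjective π →
          (∀ (g : G) (d : (G ⧸ H) →₀ ℤ),
            π (Finsupp.mapDomain (fun x => g • x) d) = g • π d) →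
          ∀ (E : Type) (_ : AddCommGroup E) (_ : DistribMulAction G E),
            (∀ e : E, IsOpen {g : G | g • e = e}) →
            ∀ (i : M →+ E) (p : E →+ Q),
              (∀ (g : G) (x : M), i (g • x) = g • i x) →
              (∀ (g : G) (e : E), p (g • e) = g • p e) →
              Function.Injective i → Function.Surjective p →
              (∀ e : E, p e = 0 ↔ e ∈ Set.range i) →
              ∃ r : E →+ M, (∀ (g : G) (e : E), r (g • e) = g • r e) ∧
                ∀ x : M, r (i x) = x) :
    -- `M` is injective: any equivariant morphism defined on a submodule `E` of a
    -- discrete `G`-module `F` extends to `F`: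
    ∀ (F : Type) (_ : AddCommGroup F) (_ : DistribMulAction G F),
      (∀ x : F, IsOpen {g : G | g • x = x}) →
      ∀ (E : Type) (_ : AddCommGroup E) (_ : DistribMulAction G E),
        (∀ e : E, IsOpen {g : G | g • e = e}) →
        ∀ (j : E →+ F), Function.Injective j →
          (∀ (g : G) (e : E), j (g • e) = g • j e) →
          ∀ (f : E →+ M), (∀ (g : G) (e : E), f (g • e) = g • f e) →
            ∃ φ : F →+ M, (∀ (g : G) (x : F), φ (g • x) = g • φ x) ∧
              ∀ e : E, φ (j e) = f e := by
  intro F iF aF hFd E iE aE hEd j hj hje f hf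
  letI := iF; letI := aF; letI := iE; letI := aE
  -- the collection of "good graphs" containing the graph of `f`
  set S : Set (Set (F × M)) :=
    {Γ | AuxGood G F M Γ ∧ ∀ e : E, (j e, f e) ∈ Γ} with hSdef
  -- the graph of `f` on `j(E)` belongs to `S`
  have hΓ₀ : {z : F × M | ∃ e : E, z = (j e, f e)} ∈ S := by
    constructor
    · refine ⟨⟨0, ?_⟩, ?_, ?_, ?_, ?_⟩
      · rw [map_zero, map_zero, Prod.mk_zero_zero]
      · rintro a ⟨e₁, rfl⟩ b ⟨e₂, rfl⟩
        exact ⟨e₁ + e₂, by rw [map_add, map_add, Prod.mk_add_mk]⟩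
      · rintro a ⟨e, rfl⟩
        exact ⟨-e, by rw [map_neg, map_neg, Prod.neg_mk]⟩
      · rintro m ⟨e, he⟩
        have h1 : (0 : F) = j e := congrArg Prod.fst he
        have h2 : m = f e := congrArg Prod.snd he
        have he0 : e = 0 := hj (by rw [← h1, map_zero])
        rw [h2, he0, map_zero]
      · rintro g a ⟨e, rfl⟩
        exact ⟨g • e, by rw [hje, hf]⟩
    · exact fun e => ⟨e, rfl⟩
  -- Zorn's lemma
  obtain ⟨mΓ, hsub0, hmax⟩ := zorn_subset_nonempty S (by
    intro c hcS hchain hcne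
    obtain ⟨t, ht⟩ := hcne
    refine ⟨⋃₀ c, ⟨⟨?_, ?_, ?_, ?_, ?_⟩, ?_⟩, fun s hs => Set.subset_sUnion_of_mem hs⟩
    · exact ⟨t, ht, (hcS ht).1.1⟩
    · rintro a ⟨t₁, ht₁, ha⟩ b ⟨t₂, ht₂, hb⟩
      rcases hchain.total ht₁ ht₂ with h | h
      · exact ⟨t₂, ht₂, (hcS ht₂).1.2.1 a (h ha) b hb⟩
      · exact ⟨t₁, ht₁, (hcS ht₁).1.2.1 a ha b (h hb)⟩
    · rintro a ⟨t₁, ht₁, ha⟩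
      exact ⟨t₁, ht₁, (hcS ht₁).1.2.2.1 a ha⟩
    · rintro m ⟨t₁, ht₁, hm⟩
      exact (hcS ht₁).1.2.2.2.1 m hm
    · rintro g a ⟨t₁, ht₁, ha⟩
      exact ⟨t₁, ht₁, (hcS ht₁).1.2.2.2.2 g a ha⟩
    · exact fun e => ⟨t, ht, (hcS ht).2 e⟩) _ hΓ₀
  obtain ⟨⟨h0, hadd, hneg, hfun, hstab⟩, hbase⟩ := hmax.1
  -- closure under subtraction and functionality
  have hsubc : ∀ a ∈ mΓ, ∀ b ∈ mΓ, a - b ∈ mΓ := fun a ha b hb => by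
    rw [sub_eq_add_neg]; exact hadd _ ha _ (hneg _ hb)
  have huniq : ∀ (y : F) (m₁ m₂ : M), (y, m₁) ∈ mΓ → (y, m₂) ∈ mΓ → m₁ = m₂ := by
    intro y m₁ m₂ h1 h2
    have h3 := hsubc _ h1 _ h2
    have h4 : ((y, m₁) - (y, m₂) : F × M) = (0, m₁ - m₂) := by
      rw [Prod.ext_iff]
      exact ⟨sub_self y, rfl⟩
    rw [h4] at h3
    exact sub_eq_zero.mp (hfun _ h3)
  -- the maximal graph is total
  have hfull : ∀ y : F, ∃ m : M, (y, m) ∈ mΓ := by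
    by_contra hcon
    push_neg at hcon
    obtain ⟨y, hy⟩ := hcon
    obtain ⟨Γ', hsub', hgood', m₀, hm₀⟩ :=
      aux_step G M hMd hext F hFd mΓ ⟨h0, hadd, hneg, hfun, hstab⟩ y
    have hΓ'S : Γ' ∈ S := ⟨hgood', fun e => hsub' (hbase e)⟩
    have := hmax.2 hΓ'S hsub'
    exact hy m₀ (this hm₀)
  choose σ hσ using hfull
  refine ⟨{ toFun := σ
            map_zero' := hfun _ (hσ 0)
            map_add' := fun y z => huniq _ _ _ (hσ (y + z))
              (by
                have := hadd _ (hσ y) _ (hσ z)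
                rw [Prod.mk_add_mk] at this
                exact this) }, ?_, ?_⟩
  · intro g y
    exact huniq _ _ _ (hσ (g • y)) (hstab g _ (hσ y))
  · intro e
    exact huniq _ _ _ (hσ (j e)) (hbase e)
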